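/- Let z : ℤ, let p : ℤ be prime, and let a b : ℤ with a^2 + z*a*b + b^2 = p or a^2 + z*a*b + b^2 = -p. If c d : ℤ satisfy p ∣ c^2 + z*c*d + d^2, then in R_z := AdjoinRoot (X^2 - C z * X + 1 : ℤ[X]) either (a + b•ω) ∣ (c + d•ω) or ((a + z*b) - b•ω) ∣ (c + d•ω). -/
import Mathlib


open Polynomial

noncomputable abbrev Rz (z : ℤ) : Type :=
  AdjoinRoot (X ^ 2 - C z * X + 1 : ℤ[X])

noncomputable abbrev omegaZ (z : ℤ) : Rz z :=
  AdjoinRoot.root (X ^ 2 - C z * X + 1 : ℤ[X])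

lemma omega_rel (z : ℤ) : (omegaZ z) ^ 2 - (z : Rz z) * omegaZ z + 1 = 0 := by
  have h := AdjoinRoot.mk_self (f := (X ^ 2 - C z * X + 1 : ℤ[X]))
  simpa [map_add, map_sub, map_mul, map_pow, AdjoinRoot.mk_X, AdjoinRoot.mk_C,
    AdjoinRoot.algebraMap_eq] using h

lemma mul_basis (z a b e f : ℤ) :
    ((a : Rz z) + b • omegaZ z) * ((e : Rz z) + f • omegaZ z) =
      ((a * e - b * f : ℤ) : Rz z) + (a * f + b * e + z * b * f) • omegaZ z := by
  have key := omega_rel z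
  simp only [zsmul_eq_mul]
  push_cast
  linear_combination ((b : Rz z) * (f : Rz z)) * key

theorem stmt10 (z p : ℤ) (hp : Prime p) (a b : ℤ)
    (hab : a ^ 2 + z * a * b + b ^ 2 = p ∨ a ^ 2 + z * a * b + b ^ 2 = -p)
    (c d : ℤ) (hcd : p ∣ c ^ 2 + z * c * d + d ^ 2) :
    ((a : Rz z) + b • omegaZ z) ∣ ((c : Rz z) + d • omegaZ z) ∨
      (((a + z * b : ℤ) : Rz z) - b • omegaZ z) ∣ ((c : Rz z) + d • omegaZ z) := by
  obtain ⟨m, hm⟩ := hcd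
  -- get a sign ε with N = ε * p
  obtain ⟨ε, hε2, hN⟩ : ∃ ε : ℤ, ε * ε = 1 ∧ a ^ 2 + z * a * b + b ^ 2 = ε * p := by
    rcases hab with h | h
    · exact ⟨1, by ring, by linarith⟩
    · exact ⟨-1, by ring, by linarith⟩
  have hp0 : p ≠ 0 := hp.ne_zero
  -- key divisibility: p ∣ (a*d - b*c) * (a*d + b*c + z*b*d)
  have hkey : p ∣ (a * d - b * c) * (a * d + b * c + z * b * d) := by
    refine ⟨ε * d ^ 2 - b ^ 2 * m, ?_⟩
    linear_combination d ^ 2 * hN - b ^ 2 * hm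
  rcases hp.dvd_mul.mp hkey with h1 | h2
  · -- case p ∣ a*d - b*c ; show left disjunct
    left
    have hX : p ∣ a * c + z * b * c + b * d := by
      by_cases hc : p ∣ c
      · by_cases hd : p ∣ d
        · obtain ⟨c', hc'⟩ := hc; obtain ⟨d', hd'⟩ := hd
          exact ⟨a * c' + z * b * c' + b * d', by linear_combination a * hc' + z * b * hc' + b * hd'⟩
        · -- p ∣ d * X  since  d*X = b*M + c*(ad - bc)
          have : p ∣ d * (a * c + z * b * c + b * d) := by
            obtain ⟨k, hk⟩ := h1
            exact ⟨b * m + c * k, by linear_combination b * hm + c * hk⟩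
          exact (hp.dvd_mul.mp this).resolve_left hd
      · -- p ∣ c * X since c*X = a*M + (bc-ad)*(z*c+d)
        have : p ∣ c * (a * c + z * b * c + b * d) := by
          obtain ⟨k, hk⟩ := h1
          exact ⟨a * m - k * (z * c + d), by linear_combination a * hm - (z * c + d) * hk⟩
        exact (hp.dvd_mul.mp this).resolve_left hc
    obtain ⟨x, hx⟩ := hX
    obtain ⟨y, hy⟩ := h1
    refine ⟨((ε * x : ℤ) : Rz z) + (ε * y) • omegaZ z, ?_⟩
    rw [mul_basis]
    have e1 : a * (ε * x) - b * (ε * y) = c :=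
      mul_left_cancel₀ hp0 (by linear_combination (-ε * a) * hx + ε * b * hy + ε * c * hN + c * p * hε2)
    have e2 : a * (ε * y) + b * (ε * x) + z * b * (ε * y) = d :=
      mul_left_cancel₀ hp0 (by linear_combination (-ε * a) * hy - ε * b * hx - ε * z * b * hy + ε * d * hN + d * p * hε2)
    rw [e1, e2]
  · -- case p ∣ a*d + b*c + z*b*d ; show right disjunct
    right
    have hY : p ∣ a * c - b * d := by
      by_cases hd : p ∣ d
      · by_cases hc : p ∣ c
        · obtain ⟨c', hc'⟩ := hc; obtain ⟨d', hd'⟩ := hd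
          exact ⟨a * c' - b * d', by linear_combination a * hc' - b * hd'⟩
        · -- c*Y = a*M - d*W - z*d*Y : use (c + z*d)*Y = a*M - d*W and p ∣ d
          obtain ⟨k, hk⟩ := h2
          obtain ⟨d', hd'⟩ := hd
          have : p ∣ c * (a * c - b * d) := by
            exact ⟨a * m - d * k - z * d' * (a * c - b * d),
              by linear_combination a * hm - d * hk - z * (a * c - b * d) * hd'⟩
          exact (hp.dvd_mul.mp this).resolve_left hc
      · -- d*Y = c*W - b*M
        have : p ∣ d * (a * c - b * d) := by
          obtain ⟨k, hk⟩ := h2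
          exact ⟨c * k - b * m, by linear_combination c * hk - b * hm⟩
        exact (hp.dvd_mul.mp this).resolve_left hd
    obtain ⟨x, hx⟩ := hY
    obtain ⟨y, hy⟩ := h2
    refine ⟨((ε * x : ℤ) : Rz z) + (ε * y) • omegaZ z, ?_⟩
    have hrw : (((a + z * b : ℤ) : Rz z) - b • omegaZ z)
        = ((a + z * b : ℤ) : Rz z) + (-b) • omegaZ z := by
      rw [neg_smul, sub_eq_add_neg]
    rw [hrw, mul_basis]
    have e1 : (a + z * b) * (ε * x) - (-b) * (ε * y) = c :=
      mul_left_cancel₀ hp0 (by linear_combination (-ε * (a + z * b)) * hx - ε * b * hy + ε * c * hN + c * p * hε2)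
    have e2 : (a + z * b) * (ε * y) + (-b) * (ε * x) + z * (-b) * (ε * y) = d :=
      mul_left_cancel₀ hp0 (by linear_combination (-ε * a) * hy + ε * b * hx + ε * d * hN + d * p * hε2)
    rw [e1, e2]
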